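/- Let K be a field and σ ∈ Aut(K). In the skew polynomial ring K[t;σ], let τ ∈ Aut(K), k a positive integer, and α ∈ K×. The map G determined by G(c) = τ(c) for all c ∈ K and G(t) = α t^k extends to a ring homomorphism K[t;σ] → K[t;σ] if and only if τ σ τ⁻¹ = σ^k. -/

import Mathlib

/-- `R` is the skew (twisted) polynomial ring `K[t;σ]`: `K` embeds via `ι`, the variable
`t` satisfies `t·c = σ(c)·t`, and every element is uniquely of the form `Σ ι(c_i) t^i`. -/
structure IsSkewPolynomialRing (K : Type*) [Field K] (σ : K ≃+* K)
    (R : Type*) [Ring R] (ι : K →+* R) (t : R) : Prop where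
  t_mul : ∀ c : K, t * ι c = ι (σ c) * t
  repr_unique : ∀ x : R, ∃! f : ℕ →₀ K, x = f.sum fun i c => ι c * t ^ i

/-- Let `K` be a field, `σ ∈ Aut(K)`, `τ ∈ Aut(K)`, `k` a positive integer
and `α ∈ K×`.  The map determined by `G(c) = τ(c)` for `c ∈ K` and `G(t) = α t^k`
extends to a ring homomorphism `K[t;σ] → K[t;σ]` if and only if `τ σ τ⁻¹ = σ^k`. -/
theorem stmt4 {K : Type*} [Field K] (σ : K ≃+* K) {R : Type*} [Ring R]
    (ι : K →+* R) (t : R) (h : IsSkewPolynomialRing K σ R ι t)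
    (τ : K ≃+* K) (k : ℕ) (hk : 0 < k) (α : K) (hα : α ≠ 0) :
    (∃ G : R →+* R, (∀ c : K, G (ι c) = ι (τ c)) ∧ G t = ι α * t ^ k) ↔
      (∀ x : K, τ (σ (τ.symm x)) = (σ ^ k) x) := by
  classical
  -- general commutation of powers of t with constants
  have tpow : ∀ (i : ℕ) (c : K), t ^ i * ι c = ι ((σ ^ i) c) * t ^ i := by
    intro i
    induction i with
    | zero => intro c; simp
    | succ n ih =>
      intro c
      have e : (σ ^ (n + 1)) c = (σ ^ n) (σ c) := by rw [pow_succ]; rfl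
      have e2 : t ^ (n + 1) * ι c = ι ((σ ^ n) (σ c)) * t ^ (n + 1) := by
        rw [pow_succ, mul_assoc, h.t_mul, ← mul_assoc, ih, mul_assoc]
      rw [e2, e]
  -- the "S" map: from finsupps to R
  set S : (ℕ →₀ K) → R := fun f => f.sum fun i c => ι c * t ^ i with hS
  have S_single : ∀ (i : ℕ) (c : K), S (Finsupp.single i c) = ι c * t ^ i := by
    intro i c
    simp only [hS]
    exact Finsupp.sum_single_index (by simp)
  have S_add : ∀ f g, S (f + g) = S f + S g := by
    intro f g
    exact Finsupp.sum_add_index' (by simp) (by intro i a b; rw [map_add, add_mul])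
  -- injectivity on monomial coefficients
  have coeff_inj : ∀ (m : ℕ) (a b : K), ι a * t ^ m = ι b * t ^ m → a = b := by
    intro m a b hab
    obtain ⟨f, hf, huniq⟩ := h.repr_unique (ι a * t ^ m)
    have h1 : Finsupp.single m a = f := huniq _ (S_single m a).symm
    have h2 : Finsupp.single m b = f := huniq _ (by rw [hab]; exact (S_single m b).symm)
    have h3 : Finsupp.single m a = Finsupp.single m b := h1.trans h2.symm
    have := congrArg (fun f : ℕ →₀ K => f m) h3
    simpa using this
  constructor
  · -- forward direction
    rintro ⟨G, hGι, hGt⟩ x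
    set c := τ.symm x with hc
    have e1 := congrArg G (h.t_mul c)
    rw [map_mul, map_mul, hGι, hGι, hGt] at e1
    -- e1 : (ι α * t^k) * ι (τ c) = ι (τ (σ c)) * (ι α * t^k)
    have e2 : ι (α * (σ ^ k) (τ c)) * t ^ k = ι (τ (σ c) * α) * t ^ k := by
      have l : ι (α * (σ ^ k) (τ c)) * t ^ k = ι α * t ^ k * ι (τ c) := by
        rw [map_mul, mul_assoc, ← tpow, ← mul_assoc]
      have r : ι (τ (σ c) * α) * t ^ k = ι (τ (σ c)) * (ι α * t ^ k) := by
        rw [map_mul, mul_assoc]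
      rw [l, r]; exact e1
    have e3 : α * (σ ^ k) (τ c) = τ (σ c) * α := coeff_inj k _ _ e2
    rw [mul_comm (τ (σ c)) α] at e3
    have e4 := mul_left_cancel₀ hα e3
    rw [hc, τ.apply_symm_apply] at e4
    exact e4.symm
  · -- backward direction: construct G
    intro hyp
    set s : R := ι α * t ^ k with hs
    -- key commutation with τ-twisted constants
    have sτ : ∀ c : K, s * ι (τ c) = ι (τ (σ c)) * s := by
      intro c
      have hx : (σ ^ k) (τ c) = τ (σ c) := by
        have := hyp (τ c); rw [τ.symm_apply_apply] at this; exact this.symm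
      rw [hs, mul_assoc, tpow k (τ c), hx, ← mul_assoc, ← map_mul, mul_comm α,
        map_mul, mul_assoc]
    have spowτ : ∀ (i : ℕ) (c : K), s ^ i * ι (τ c) = ι (τ ((σ ^ i) c)) * s ^ i := by
      intro i
      induction i with
      | zero => intro c; simp
      | succ n ih =>
        intro c
        have e : (σ ^ (n + 1)) c = (σ ^ n) (σ c) := by rw [pow_succ]; rfl
        have e2 : s ^ (n + 1) * ι (τ c) = ι (τ ((σ ^ n) (σ c))) * s ^ (n + 1) := by
          rw [pow_succ, mul_assoc, sτ, ← mul_assoc, ih, mul_assoc]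
        rw [e2, e]
    -- the "T" map
    set T : (ℕ →₀ K) → R := fun f => f.sum fun i c => ι (τ c) * s ^ i with hT
    have T_single : ∀ (i : ℕ) (c : K), T (Finsupp.single i c) = ι (τ c) * s ^ i := by
      intro i c
      simp only [hT]
      exact Finsupp.sum_single_index (by simp)
    have T_add : ∀ f g, T (f + g) = T f + T g := by
      intro f g
      exact Finsupp.sum_add_index' (by simp) (by intro i a b; rw [map_add, map_add, add_mul])
    -- the representation map
    set rep : R → (ℕ →₀ K) := fun x : R => (h.repr_unique x).choose with hrepdef
    have hrep1 : ∀ x : R, x = S (rep x) := fun x => (h.repr_unique x).choose_spec.1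
    have hrep2 : ∀ (x : R) (f : ℕ →₀ K), x = S f → f = rep x :=
      fun x => (h.repr_unique x).choose_spec.2
    set Gf : R → R := fun x => T (rep x) with hGf
    have Gmono : ∀ (m : ℕ) (e : K), Gf (ι e * t ^ m) = ι (τ e) * s ^ m := by
      intro m e
      have : Finsupp.single m e = rep (ι e * t ^ m) := hrep2 _ _ (S_single m e).symm
      rw [hGf]; simp only [← this, T_single]
    have Gzero : Gf 0 = 0 := by
      have : (0 : ℕ →₀ K) = rep 0 := hrep2 _ _ (by simp [hS])
      rw [hGf]; simp only [← this]; simp [hT]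
    have Gadd : ∀ x y, Gf (x + y) = Gf x + Gf y := by
      intro x y
      have : rep x + rep y = rep (x + y) := by
        apply hrep2
        rw [S_add, ← hrep1, ← hrep1]
      rw [hGf]; simp only [← this, T_add]
    -- additive monoid hom version, to push Gf through Finsupp sums
    set G₀ : R →+ R := { toFun := Gf, map_zero' := Gzero, map_add' := Gadd } with hG₀
    -- multiplication of monomials
    have mono_mul : ∀ (i j : ℕ) (c d : K),
        (ι c * t ^ i) * (ι d * t ^ j) = ι (c * (σ ^ i) d) * t ^ (i + j) := by
      intro i j c d
      rw [mul_assoc, ← mul_assoc (t ^ i), tpow, map_mul, mul_assoc, mul_assoc, ← pow_add,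
        ← mul_assoc]
    have Gmono_mul : ∀ (i j : ℕ) (c d : K),
        (ι (τ c) * s ^ i) * (ι (τ d) * s ^ j) = ι (τ (c * (σ ^ i) d)) * s ^ (i + j) := by
      intro i j c d
      rw [mul_assoc, ← mul_assoc (s ^ i), spowτ, ← mul_assoc, ← mul_assoc,
        ← map_mul ι, ← map_mul τ, mul_assoc, ← pow_add]
    have Gmul : ∀ x y, Gf (x * y) = Gf x * Gf y := by
      intro x y
      have hx := hrep1 x
      have hy := hrep1 y
      set f := rep x
      set g := rep y
      have lhs : Gf (x * y) = f.sum fun i c => g.sum fun j d =>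
          ι (τ (c * (σ ^ i) d)) * s ^ (i + j) := by
        rw [hx, hy, hS]
        rw [Finsupp.sum_mul]
        simp only [Finsupp.mul_sum]
        simp only [mono_mul]
        rw [show Gf = ⇑G₀ from rfl, map_finsuppSum]
        refine Finsupp.sum_congr fun i _ => ?_
        rw [map_finsuppSum]
        refine Finsupp.sum_congr fun j _ => ?_
        exact Gmono _ _
      have rhs : Gf x * Gf y = f.sum fun i c => g.sum fun j d =>
          ι (τ (c * (σ ^ i) d)) * s ^ (i + j) := by
        show T f * T g = _
        rw [hT]
        rw [Finsupp.sum_mul]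
        refine Finsupp.sum_congr fun i _ => ?_
        rw [Finsupp.mul_sum]
        refine Finsupp.sum_congr fun j _ => ?_
        exact Gmono_mul _ _ _ _
      rw [lhs, rhs]
    have Gone : Gf 1 = 1 := by
      have h1 : (1 : R) = ι 1 * t ^ 0 := by simp
      rw [h1, Gmono]; simp
    refine ⟨{ toFun := Gf, map_one' := Gone, map_mul' := Gmul,
              map_zero' := Gzero, map_add' := Gadd }, ?_, ?_⟩
    · intro c
      show Gf (ι c) = ι (τ c)
      have h1 : ι c = ι c * t ^ 0 := by simp
      rw [h1, Gmono]; simp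
    · show Gf t = ι α * t ^ k
      have h1 : t = ι 1 * t ^ 1 := by simp
      rw [h1, Gmono]; simp [hs]
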